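/- For 0 < p ≤ 1/2 and 0 < D < 1/2, H(p ∗ D) > H(D) whenever D < p, where H is the binary entropy function; consequently the binary Wyner–Ziv rate R₁⋆ = H(p ∗ D) − H(D) is strictly positive for 0 < D < p ≤ 1/2. -/
import Mathlib

def binConv (p q : ℝ) : ℝ := p * (1 - q) + q * (1 - p)

/-- Binary entropy function (base 2), with `H 0 = H 1 = 0`. -/
noncomputable def binH (x : ℝ) : ℝ := -x * Real.logb 2 x - (1 - x) * Real.logb 2 (1 - x)

lemma binH_eq (x : ℝ) : binH x = Real.binEntropy x / Real.log 2 := by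
  simp [binH, Real.binEntropy, Real.logb, Real.log_inv]
  ring

theorem binH_conv_gt (p D : ℝ) (hp0 : 0 < p) (hp : p ≤ 1/2)
    (hD0 : 0 < D) (hD : D < 1/2) (hDp : D < p) :
    binH (binConv p D) > binH D ∧ 0 < binH (binConv p D) - binH D := by
  have hmem1 : D ∈ Set.Icc (0:ℝ) 2⁻¹ := ⟨hD0.le, by linarith⟩
  have hmem2 : binConv p D ∈ Set.Icc (0:ℝ) 2⁻¹ := by
    unfold binConv
    constructor
    · nlinarith
    · rw [show (2⁻¹:ℝ) = 1/2 by norm_num]; nlinarith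
  have hlt : D < binConv p D := by unfold binConv; nlinarith
  have := Real.binEntropy_strictMonoOn hmem1 hmem2 hlt
  have hlog : (0:ℝ) < Real.log 2 := Real.log_pos (by norm_num)
  have key : binH D < binH (binConv p D) := by
    rw [binH_eq, binH_eq]
    exact div_lt_div_of_pos_right this hlog
  exact ⟨key, by linarith⟩
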